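/- Let Ω : ℝ → ℝ³ be differentiable, let m(t) be the skew-symmetric 3×3 matrix with m(t)·y = Ω(t) × y for all y, and let O : ℝ → ℝ^{3×3} be differentiable with O'(t) = m(t)·O(t) and O(t)ᵀO(t) = I, det O(t) = 1 for all t. Let J₀ be a constant real 3×3 matrix, set J(t) := O(t)·J₀·O(t)ᵀ and ω(t) := O(t)ᵀ·Ω(t). Then ω is differentiable and the map t ↦ J(t)·Ω(t) is differentiable with (J Ω)'(t) = O(t)·( J₀·ω'(t) + ω(t) × (J₀·ω(t)) ) for every t. (This identity transforms Euler's equation (JΩ)' = T for the rigid body into an equation for ω in the reference frame.) -/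

import Mathlib

open Matrix

attribute [local instance] Matrix.frobeniusNormedAddCommGroup Matrix.frobeniusNormedSpace

private lemma cross_poly (M : Matrix (Fin 3) (Fin 3) ℝ) (a b : Fin 3 → ℝ) :
    Mᵀ.mulVec (crossProduct (M.mulVec a) (M.mulVec b)) = M.det • crossProduct a b := by
  funext i
  fin_cases i <;>
    simp [Matrix.mulVec, dotProduct, cross_apply, Fin.sum_univ_three,
      Matrix.det_fin_three, Matrix.transpose_apply] <;> ring

private lemma rot_cross (M : Matrix (Fin 3) (Fin 3) ℝ) (h1 : Mᵀ * M = 1) (h2 : M.det = 1)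
    (a b : Fin 3 → ℝ) :
    crossProduct (M.mulVec a) (M.mulVec b) = M.mulVec (crossProduct a b) := by
  have h1' : M * Mᵀ = 1 := mul_eq_one_comm.mp h1
  calc crossProduct (M.mulVec a) (M.mulVec b)
      = (M * Mᵀ).mulVec (crossProduct (M.mulVec a) (M.mulVec b)) := by
        rw [h1', Matrix.one_mulVec]
    _ = M.mulVec (Mᵀ.mulVec (crossProduct (M.mulVec a) (M.mulVec b))) :=
        (Matrix.mulVec_mulVec _ _ _).symm
    _ = M.mulVec (M.det • crossProduct a b) := by rw [cross_poly]
    _ = M.mulVec (crossProduct a b) := by rw [h2, one_smul]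

private lemma hasDerivAt_mulVec' {A : ℝ → Matrix (Fin 3) (Fin 3) ℝ}
    {A' : Matrix (Fin 3) (Fin 3) ℝ} {v : ℝ → Fin 3 → ℝ} {v' : Fin 3 → ℝ} {t : ℝ}
    (hA : HasDerivAt A A' t) (hv : HasDerivAt v v' t) :
    HasDerivAt (fun s => (A s).mulVec (v s)) (A'.mulVec (v t) + (A t).mulVec v') t := by
  rw [hasDerivAt_pi]
  intro i
  have hAij : ∀ j, HasDerivAt (fun s => A s i j) (A' i j) t := by
    intro j
    let L : Matrix (Fin 3) (Fin 3) ℝ →L[ℝ] ℝ :=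
      LinearMap.toContinuousLinearMap
        { toFun := fun M => M i j, map_add' := fun _ _ => rfl, map_smul' := fun _ _ => rfl }
    have := (L.hasFDerivAt (x := A t)).comp_hasDerivAt t hA
    exact this
  have hvj := hasDerivAt_pi.mp hv
  have hsum : HasDerivAt (fun s => ∑ j, A s i j * v s j)
      (∑ j, (A' i j * v t j + A t i j * v' j)) t :=
    HasDerivAt.fun_sum fun j _ => (hAij j).mul (hvj j)
  simpa [Matrix.mulVec, dotProduct, Finset.sum_add_distrib] using hsum

/-- Let `Ω` be differentiable, `m(t)` the skew-symmetric matrix with `m(t)·y = Ω(t) × y`,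
and `O` a solution of `O' = m·O` with `O(t) ∈ SO(3)`. With `J(t) := O(t)·J₀·O(t)ᵀ` and
`ω := Oᵀ·Ω`, the map `ω` is differentiable and `t ↦ J(t)·Ω(t)` is differentiable with
`(JΩ)'(t) = O(t)·(J₀·ω'(t) + ω(t) × (J₀·ω(t)))`. -/
theorem transformed_euler_identity (Ω Ω' : ℝ → Fin 3 → ℝ)
    (hΩ : ∀ t, HasDerivAt Ω (Ω' t) t)
    (m : ℝ → Matrix (Fin 3) (Fin 3) ℝ)
    (hm : ∀ t y, (m t).mulVec y = crossProduct (Ω t) y)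
    (O : ℝ → Matrix (Fin 3) (Fin 3) ℝ)
    (hO : ∀ t, HasDerivAt O (m t * O t) t)
    (horth : ∀ t, (O t)ᵀ * O t = 1) (hdet : ∀ t, (O t).det = 1)
    (J₀ : Matrix (Fin 3) (Fin 3) ℝ) :
    ∃ ω' : ℝ → Fin 3 → ℝ,
      (∀ t, HasDerivAt (fun s => (O s)ᵀ.mulVec (Ω s)) (ω' t) t) ∧
      ∀ t, HasDerivAt (fun s => (O s * J₀ * (O s)ᵀ).mulVec (Ω s))
        ((O t).mulVec (J₀.mulVec (ω' t)
          + crossProduct ((O t)ᵀ.mulVec (Ω t)) (J₀.mulVec ((O t)ᵀ.mulVec (Ω t))))) t := by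
  -- transpose derivative
  have hTr : ∀ t, HasDerivAt (fun s => (O s)ᵀ) ((m t * O t)ᵀ) t := by
    intro t
    let L : Matrix (Fin 3) (Fin 3) ℝ →L[ℝ] Matrix (Fin 3) (Fin 3) ℝ :=
      LinearMap.toContinuousLinearMap
        ((Matrix.transposeLinearEquiv (Fin 3) (Fin 3) ℝ ℝ).toLinearMap)
    have := (L.hasFDerivAt (x := O t)).comp_hasDerivAt t (hO t)
    exact this
  -- m is "skew against Ω": mᵀ Ω = 0
  have hskew : ∀ t, (m t)ᵀ.mulVec (Ω t) = 0 := by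
    intro t
    funext j
    have h1 : (m t)ᵀ.mulVec (Ω t) j = Ω t ⬝ᵥ (m t).mulVec (Pi.single j 1) := by
      simp [Matrix.mulVec_transpose, Matrix.vecMul, Matrix.mulVec, dotProduct,
        Pi.single_apply, mul_comm]
    rw [h1, hm, dot_self_cross]
    rfl
  set ωf : ℝ → Fin 3 → ℝ := fun s => (O s)ᵀ.mulVec (Ω s) with hωf
  refine ⟨fun t => (O t)ᵀ.mulVec (Ω' t), ?_, ?_⟩
  · intro t
    have h := hasDerivAt_mulVec' (hTr t) (hΩ t)
    have hz : ((O t)ᵀ * (m t)ᵀ).mulVec (Ω t) = 0 := by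
      rw [← Matrix.mulVec_mulVec, hskew, Matrix.mulVec_zero]
    simpa [Matrix.transpose_mul, hz] using h
  · intro t
    have hω : HasDerivAt ωf ((O t)ᵀ.mulVec (Ω' t)) t := by
      rw [hωf]
      have h := hasDerivAt_mulVec' (hTr t) (hΩ t)
      have hz : ((O t)ᵀ * (m t)ᵀ).mulVec (Ω t) = 0 := by
        rw [← Matrix.mulVec_mulVec, hskew, Matrix.mulVec_zero]
      simpa [Matrix.transpose_mul, hz] using h
    have h2 : HasDerivAt (fun s => J₀.mulVec (ωf s)) (J₀.mulVec ((O t)ᵀ.mulVec (Ω' t))) t := by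
      have := hasDerivAt_mulVec' (hasDerivAt_const t J₀) hω
      simpa using this
    have h3 := hasDerivAt_mulVec' (hO t) h2
    have hfun : (fun s => (O s * J₀ * (O s)ᵀ).mulVec (Ω s))
        = fun s => (O s).mulVec (J₀.mulVec (ωf s)) := by
      funext s
      simp [ωf, Matrix.mulVec_mulVec, Matrix.mul_assoc]
    rw [hfun]
    have hOOt : O t * (O t)ᵀ = 1 := mul_eq_one_comm.mp (horth t)
    have hΩω : (O t).mulVec (ωf t) = Ω t := by
      rw [hωf]
      rw [Matrix.mulVec_mulVec, hOOt, Matrix.one_mulVec]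
    have hcross : (m t * O t).mulVec (J₀.mulVec (ωf t))
        = (O t).mulVec (crossProduct (ωf t) (J₀.mulVec (ωf t))) := by
      rw [← Matrix.mulVec_mulVec, hm, ← rot_cross (O t) (horth t) (hdet t), hΩω]
    rw [Matrix.mulVec_add]
    rw [hcross] at h3
    convert h3 using 1
    rw [add_comm]
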